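/- Let ĥ be an n-sample Monte Carlo estimate of a smoothed model h̄ : X → Δ(Y) with |Y| = m, i.e., ĥ(x)[y] = (1/n)Σⱼ 1[f(x+tⱼ)=y] with tⱼ i.i.d. from g. If h̄ is individually fair under a metric D, then for all x₁, x₂ and all ε > 0: with probability at least 1 - 2m·exp(-4nε²/m²), TV(ĥ(x₁), ĥ(x₂)) ≤ D(x₁,x₂) + ε. -/

import Mathlib

open Real MeasureTheory ProbabilityTheory Finset Classical

lemma bern_mgf_bound {p : ℝ} (hp0 : 0 ≤ p) (hp1 : p ≤ 1) (s : ℝ) :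
    p * exp (s * (1 - p)) + (1 - p) * exp (-(s * p)) ≤ exp (s ^ 2 / 8) := by
  have hD : ∀ u : ℝ, 0 < 1 - p + p * exp u := by
    intro u
    rcases eq_or_lt_of_le hp0 with h | h
    · simp [← h]
    · have := exp_pos u
      nlinarith
  set g : ℝ → ℝ := fun u => Real.log (1 - p + p * exp u) - u * p with hg
  set h1 : ℝ → ℝ := fun u => u / 4 + p - p * exp u / (1 - p + p * exp u) with hh1
  set h : ℝ → ℝ := fun u => u ^ 2 / 8 - g u with hh
  have hder : ∀ u, HasDerivAt h (h1 u) u := by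
    intro u
    have hDd : HasDerivAt (fun u => 1 - p + p * exp u) (p * exp u) u := by
      simpa using ((hasDerivAt_exp u).const_mul p).const_add (1 - p)
    have hlog : HasDerivAt (fun u => Real.log (1 - p + p * exp u))
        (p * exp u / (1 - p + p * exp u)) u := hDd.log (hD u).ne'
    have : HasDerivAt g (p * exp u / (1 - p + p * exp u) - p) u := by
      exact (hlog.sub ((hasDerivAt_id u).mul_const p)).congr_deriv (by ring)
    have hsq : HasDerivAt (fun u : ℝ => u ^ 2 / 8) (u / 4) u := by
      have := (hasDerivAt_pow 2 u).div_const 8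
      exact this.congr_deriv (by rw [show (2:ℕ) - 1 = 1 from rfl]; push_cast; ring)
    have := hsq.sub this
    exact this.congr_deriv (by simp only [hh1]; ring)
  have hder1 : ∀ u, HasDerivAt h1 (1 / 4 - p * exp u * (1 - p) / (1 - p + p * exp u) ^ 2) u := by
    intro u
    have hDd : HasDerivAt (fun u => 1 - p + p * exp u) (p * exp u) u := by
      simpa using ((hasDerivAt_exp u).const_mul p).const_add (1 - p)
    have hN : HasDerivAt (fun u => p * exp u) (p * exp u) u := (hasDerivAt_exp u).const_mul p
    have hq : HasDerivAt (fun u => p * exp u / (1 - p + p * exp u))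
        ((p * exp u * (1 - p + p * exp u) - p * exp u * (p * exp u)) / (1 - p + p * exp u) ^ 2) u :=
      hN.div hDd (hD u).ne'
    have hlin : HasDerivAt (fun u : ℝ => u / 4 + p) (1 / 4) u := by
      simpa using (hasDerivAt_id u).div_const 4 |>.add_const p
    have := hlin.sub hq
    refine this.congr_deriv ?_
    have := (hD u).ne'
    rw [sub_right_inj]; congr 1; ring
  have hder1nn : ∀ u, 0 ≤ 1 / 4 - p * exp u * (1 - p) / (1 - p + p * exp u) ^ 2 := by
    intro u
    rw [sub_nonneg, div_le_iff₀ (pow_pos (hD u) 2)]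
    nlinarith [sq_nonneg (1 - p - p * exp u), exp_pos u]
  have h1mono : Monotone h1 := by
    have : ∀ u, 0 ≤ deriv h1 u := fun u => by
      rw [(hder1 u).deriv]; exact hder1nn u
    exact monotone_of_deriv_nonneg (fun u => (hder1 u).differentiableAt) this
  have h10 : h1 0 = 0 := by simp [hh1]
  have h0 : h 0 = 0 := by simp [hh, hg]
  have key : ∀ u, 0 ≤ h u := by
    intro u
    rcases le_total 0 u with hu | hu
    · have : MonotoneOn h (Set.Ici 0) := by
        apply monotoneOn_of_deriv_nonneg (convex_Ici 0)
          (Continuous.continuousOn (by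
            have : ∀ u, DifferentiableAt ℝ h u := fun u => (hder u).differentiableAt
            exact (Differentiable.continuous this)))
          (fun u _ => (hder u).differentiableAt.differentiableWithinAt)
        intro u hu'
        rw [(hder u).deriv]
        have := h1mono (le_of_lt (by simpa using hu'))
        rw [h10] at this
        exact this
      have := this (Set.mem_Ici.2 le_rfl) (Set.mem_Ici.2 hu) hu
      rwa [h0] at this
    · have : AntitoneOn h (Set.Iic 0) := by
        apply antitoneOn_of_deriv_nonpos (convex_Iic 0)
          (Continuous.continuousOn (by
            have : ∀ u, DifferentiableAt ℝ h u := fun u => (hder u).differentiableAt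
            exact (Differentiable.continuous this)))
          (fun u _ => (hder u).differentiableAt.differentiableWithinAt)
        intro u hu'
        rw [(hder u).deriv]
        have := h1mono (le_of_lt (by simpa using hu'))
        rw [h10] at this
        exact this
      have := this (Set.mem_Iic.2 hu) (Set.mem_Iic.2 le_rfl) hu
      rwa [h0] at this
  have hgle : g s ≤ s ^ 2 / 8 := by have := key s; simp [hh] at this; linarith
  calc p * exp (s * (1 - p)) + (1 - p) * exp (-(s * p)) = exp (g s) := by
        rw [hg]
        simp only
        rw [exp_sub, exp_log (hD s)]
        rw [eq_div_iff (exp_ne_zero _)]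
        have e1 : exp (s * (1 - p)) * exp (s * p) = exp s := by rw [← exp_add]; ring_nf
        have e2 : exp (-(s * p)) * exp (s * p) = 1 := by rw [← exp_add]; simp
        linear_combination p * e1 + (1 - p) * e2
    _ ≤ exp (s ^ 2 / 8) := exp_le_exp.2 hgle

lemma my_chernoff {Ω : Type*} [MeasurableSpace Ω] (P : Measure Ω) [IsProbabilityMeasure P]
    {ι : Type*} [Fintype ι] {n : ℕ} (hn : 0 < n) (hcard : Fintype.card ι = 2 * n)
    (X : ι → Ω → ℝ) (hindep : iIndepFun X P)
    (hmeas : ∀ j, Measurable (X j))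
    (hint : ∀ j t, Integrable (fun ω => exp (t * X j ω)) P)
    (hmgf : ∀ j t, mgf (X j) P t ≤ exp (t ^ 2 / (8 * n ^ 2)))
    (s : ℝ) (hs : 0 ≤ s) :
    (P {ω | s ≤ ∑ j, X j ω}).toReal ≤ exp (-(n * s ^ 2)) := by
  set t : ℝ := 2 * n * s with ht
  have htnn : 0 ≤ t := by positivity
  have hintS : Integrable (fun ω => exp (t * (∑ j, X j) ω)) P :=
    hindep.integrable_exp_mul_sum hmeas (fun i _ => hint i t)
  have h1 : (P {ω | s ≤ (∑ j, X j) ω}).toReal ≤ exp (-t * s) * mgf (∑ j, X j) P t :=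
    measure_ge_le_exp_mul_mgf s htnn hintS
  have h2 : mgf (∑ j, X j) P t ≤ exp (t ^ 2 / (4 * n)) := by
    rw [show (∑ j, X j) = ∑ j ∈ univ, X j from rfl, hindep.mgf_sum hmeas]
    calc ∏ j : ι, mgf (X j) P t ≤ ∏ _j : ι, exp (t ^ 2 / (8 * n ^ 2)) :=
          Finset.prod_le_prod (fun j _ => mgf_nonneg) (fun j _ => hmgf j t)
      _ = exp (t ^ 2 / (8 * n ^ 2)) ^ Fintype.card ι := by
          rw [Finset.prod_const, Finset.card_univ]
      _ = exp (t ^ 2 / (4 * n)) := by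
          rw [hcard, ← Real.exp_nat_mul]
          congr 1
          have : (n : ℝ) ≠ 0 := Nat.cast_ne_zero.2 hn.ne'
          field_simp
          push_cast
          ring
  calc (P {ω | s ≤ ∑ j, X j ω}).toReal ≤ exp (-t * s) * mgf (∑ j, X j) P t := by
        convert h1 using 4 with ω
        simp
    _ ≤ exp (-t * s) * exp (t ^ 2 / (4 * n)) :=
        mul_le_mul_of_nonneg_left h2 (exp_nonneg _)
    _ = exp (-(n * s ^ 2)) := by
        rw [← exp_add]
        congr 1
        have : (n : ℝ) ≠ 0 := Nat.cast_ne_zero.2 hn.ne'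
        field_simp [ht]
        ring

lemma my_ind_integral {α : Type*} [MeasurableSpace α] (ν : Measure α) [IsProbabilityMeasure ν]
    {A : Set α} (hA : MeasurableSet A) (c1 c0 : ℝ) :
    ∫ τ, (if τ ∈ A then c1 else c0) ∂ν = (ν A).toReal * c1 + (1 - (ν A).toReal) * c0 := by
  have h : (fun τ => if τ ∈ A then c1 else c0)
      = fun τ => A.indicator (fun _ => c1 - c0) τ + c0 := by
    ext τ; by_cases h : τ ∈ A <;> simp [h]
  rw [h, integral_add (((integrable_const (c1 - c0)).indicator hA)) (integrable_const c0),
    integral_indicator_const _ hA, integral_const]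
  simp [smul_eq_mul, measure_univ]
  rw [measureReal_def]; ring

lemma my_mgf_ind {Ω α : Type*} [MeasurableSpace Ω] [MeasurableSpace α]
    (P : Measure Ω) [IsProbabilityMeasure P] (ν : Measure α) [IsProbabilityMeasure ν]
    (T : Ω → α) (hT : Measurable T) (hlaw : Measure.map T P = ν)
    {A : Set α} (hA : MeasurableSet A) {n : ℕ} (hn : 0 < n) {c : ℝ} (hc : c = 1 ∨ c = -1)
    (t : ℝ) :
    mgf (fun ω => c * ((if T ω ∈ A then (1 : ℝ) else 0) - (ν A).toReal) / n) P t
      ≤ exp (t ^ 2 / (8 * n ^ 2)) := by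
  set p : ℝ := (ν A).toReal with hp
  have hp0 : 0 ≤ p := ENNReal.toReal_nonneg
  have hp1 : p ≤ 1 := by
    rw [hp]
    exact ENNReal.toReal_le_of_le_ofReal one_pos.le (by simpa using prob_le_one (μ := ν) (s := A))
  set s : ℝ := t * c / n with hs
  have key : mgf (fun ω => c * ((if T ω ∈ A then (1 : ℝ) else 0) - p) / n) P t
      = p * exp (s * (1 - p)) + (1 - p) * exp (-(s * p)) := by
    unfold mgf
    have hrw : ∀ ω, exp (t * (c * ((if T ω ∈ A then (1 : ℝ) else 0) - p) / n))
        = if T ω ∈ A then exp (s * (1 - p)) else exp (-(s * p)) := by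
      intro ω
      by_cases h : T ω ∈ A <;> simp only [h, if_true, if_false] <;> congr 1 <;>
        · rw [hs]; ring
    simp only [hrw]
    have hmeasg : Measurable fun τ => if τ ∈ A then exp (s * (1 - p)) else exp (-(s * p)) :=
      Measurable.ite hA measurable_const measurable_const
    have := integral_map (μ := P) hT.aemeasurable
      (f := fun τ => if τ ∈ A then exp (s * (1 - p)) else exp (-(s * p)))
      hmeasg.aestronglyMeasurable
    rw [hlaw] at this
    rw [← this, my_ind_integral ν hA]
  rw [key]
  calc p * exp (s * (1 - p)) + (1 - p) * exp (-(s * p)) ≤ exp (s ^ 2 / 8) :=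
        bern_mgf_bound hp0 hp1 s
    _ ≤ exp (t ^ 2 / (8 * n ^ 2)) := by
        apply exp_le_exp.2
        have hc2 : c ^ 2 = 1 := by rcases hc with h | h <;> rw [h] <;> ring
        have hs2 : s ^ 2 = t ^ 2 / (n : ℝ) ^ 2 := by
          rw [hs, div_pow, mul_pow, hc2, mul_one]
        rw [hs2]
        apply le_of_eq
        rw [div_div]
        ring

lemma my_int_exp {Ω : Type*} [MeasurableSpace Ω] (P : Measure Ω) [IsFiniteMeasure P]
    {X : Ω → ℝ} (hX : Measurable X) {B : ℝ} (hB : ∀ ω, |X ω| ≤ B) (t : ℝ) :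
    Integrable (fun ω => exp (t * X ω)) P := by
  apply Integrable.mono' (integrable_const (exp (|t| * B)))
    ((hX.const_mul t).exp.aestronglyMeasurable)
  filter_upwards with ω
  rw [Real.norm_eq_abs, abs_of_pos (exp_pos _)]
  apply exp_le_exp.2
  calc t * X ω ≤ |t * X ω| := le_abs_self _
    _ = |t| * |X ω| := abs_mul _ _
    _ ≤ |t| * B := mul_le_mul_of_nonneg_left (hB ω) (abs_nonneg t)

lemma my_sum_center {n : ℕ} (hn : 0 < n) (σ p : ℝ) (a : Fin n → ℝ) :
    ∑ j, σ * (a j - p) / (n : ℝ) = σ * ((1 / n) * ∑ j, a j - p) := by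
  have hn' : ((n : ℝ)) ≠ 0 := Nat.cast_ne_zero.2 hn.ne'
  rw [← Finset.sum_div, ← Finset.mul_sum, Finset.sum_sub_distrib, Finset.sum_const,
    Finset.card_univ, Fintype.card_fin]
  field_simp
  rw [nsmul_eq_mul]

lemma my_ofReal_one_sub {x : ℝ} (hx : 0 ≤ x) :
    ENNReal.ofReal (1 - x) ≤ 1 - ENNReal.ofReal x := by
  rw [ENNReal.ofReal_sub _ hx, ENNReal.ofReal_one]

open Finset MeasureTheory ProbabilityTheory Classical in
theorem stmt_17 {d n : ℕ} {Y : Type*} [Fintype Y] [MeasurableSpace Y]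
    [MeasurableSingletonClass Y]
    {Ω : Type*} [MeasurableSpace Ω] (P : Measure Ω) [IsProbabilityMeasure P]
    (m : ℕ) (hm : m = Fintype.card Y)
    (ν : Measure (Fin d → ℝ)) [IsProbabilityMeasure ν]
    (f : (Fin d → ℝ) → Y) (hf : Measurable f)
    (hbar : (Fin d → ℝ) → Y → ℝ)
    (hhbar : ∀ x y, hbar x y = (ν {t | f (x + t) = y}).toReal)
    (D : (Fin d → ℝ) → (Fin d → ℝ) → ℝ)
    (hfair : ∀ a b, (1 / 2) * ∑ y, |hbar a y - hbar b y| ≤ D a b)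
    (T : (Fin n ⊕ Fin n) → Ω → (Fin d → ℝ))
    (hTmeas : ∀ j, Measurable (T j))
    (hTindep : iIndepFun T P)
    (hTlaw : ∀ j, Measure.map (T j) P = ν) :
    ∀ (x1 x2 : Fin d → ℝ) (ε : ℝ), 0 < ε →
      P {ω | (1 / 2) * ∑ y,
            |((1 : ℝ) / n) * ∑ j : Fin n, (if f (x1 + T (Sum.inl j) ω) = y then (1 : ℝ) else 0)
              - ((1 : ℝ) / n) * ∑ j : Fin n, (if f (x2 + T (Sum.inr j) ω) = y then (1 : ℝ) else 0)|
          ≤ D x1 x2 + ε}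
        ≥ ENNReal.ofReal (1 - 2 * m * Real.exp (-4 * n * ε ^ 2 / m ^ 2)) := by
  intro x1 x2 ε hε
  have hDnn : 0 ≤ D x1 x2 := le_trans (by positivity) (hfair x1 x2)
  rw [ge_iff_le]
  by_cases htriv : n = 0 ∨ m = 0
  · have hE : {ω : Ω | (1 / 2) * ∑ y,
            |((1 : ℝ) / n) * ∑ j : Fin n, (if f (x1 + T (Sum.inl j) ω) = y then (1 : ℝ) else 0)
              - ((1 : ℝ) / n) * ∑ j : Fin n, (if f (x2 + T (Sum.inr j) ω) = y then (1 : ℝ) else 0)|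
          ≤ D x1 x2 + ε} = Set.univ := by
      apply Set.eq_univ_iff_forall.2
      intro ω
      simp only [Set.mem_setOf_eq]
      rcases htriv with h | h
      · subst h
        simp only [Nat.cast_zero, div_zero, zero_mul, Finset.univ_eq_empty, Finset.sum_empty,
          sub_zero, abs_zero, Finset.sum_const, smul_eq_mul, smul_zero, mul_zero]
        linarith
      · have hcY : Fintype.card Y = 0 := by rw [← hm]; exact h
        haveI : IsEmpty Y := Fintype.card_eq_zero_iff.mp hcY
        simp only [Finset.univ_eq_empty, Finset.sum_empty, mul_zero]
        linarith
    rw [hE, measure_univ]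
    exact ENNReal.ofReal_le_one.2 (sub_le_self _ (by positivity))
  push_neg at htriv
  obtain ⟨hn0, hm0⟩ := htriv
  have hn' : 0 < n := Nat.pos_of_ne_zero hn0
  have hm' : 0 < m := Nat.pos_of_ne_zero hm0
  have hmR : ((m : ℝ)) ≠ 0 := Nat.cast_ne_zero.2 hm0
  have hnR : ((n : ℝ)) ≠ 0 := Nat.cast_ne_zero.2 hn0
  set s : ℝ := 2 * ε / m with hsdef
  have hs0 : 0 < s := by positivity
  -- the sets
  set A1 : Y → Set (Fin d → ℝ) := fun y => {τ | f (x1 + τ) = y} with hA1def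
  set A2 : Y → Set (Fin d → ℝ) := fun y => {τ | f (x2 + τ) = y} with hA2def
  have haddmeas : ∀ x : Fin d → ℝ, Measurable (fun τ : Fin d → ℝ => x + τ) := fun x =>
    measurable_const_add x
  have hA1 : ∀ y, MeasurableSet (A1 y) := fun y =>
    (hf.comp (haddmeas x1)) (measurableSet_singleton y)
  have hA2 : ∀ y, MeasurableSet (A2 y) := fun y =>
    (hf.comp (haddmeas x2)) (measurableSet_singleton y)
  set p1 : Y → ℝ := fun y => (ν (A1 y)).toReal with hp1def
  set p2 : Y → ℝ := fun y => (ν (A2 y)).toReal with hp2def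
  have hp1b : ∀ y, 0 ≤ p1 y ∧ p1 y ≤ 1 := fun y =>
    ⟨ENNReal.toReal_nonneg, ENNReal.toReal_le_of_le_ofReal one_pos.le (by simpa using prob_le_one (μ := ν) (s := A1 y))⟩
  have hp2b : ∀ y, 0 ≤ p2 y ∧ p2 y ≤ 1 := fun y =>
    ⟨ENNReal.toReal_nonneg, ENNReal.toReal_le_of_le_ofReal one_pos.le (by simpa using prob_le_one (μ := ν) (s := A2 y))⟩
  -- the centered variables
  set g : Y → ℝ → (Fin n ⊕ Fin n) → (Fin d → ℝ) → ℝ := fun y σ j =>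
    Sum.elim (fun _ => fun τ => σ * ((if τ ∈ A1 y then (1 : ℝ) else 0) - p1 y) / n)
             (fun _ => fun τ => (-σ) * ((if τ ∈ A2 y then (1 : ℝ) else 0) - p2 y) / n) j
    with hgdef
  set X : Y → ℝ → (Fin n ⊕ Fin n) → Ω → ℝ := fun y σ j ω => g y σ j (T j ω) with hXdef
  have hgmeas : ∀ y σ j, Measurable (g y σ j) := by
    intro y σ j
    cases j with
    | inl j =>
        exact ((Measurable.ite (hA1 y) measurable_const measurable_const).sub
          measurable_const).const_mul σ |>.div_const _
    | inr j =>
        exact ((Measurable.ite (hA2 y) measurable_const measurable_const).sub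
          measurable_const).const_mul (-σ) |>.div_const _
  have hgbdd : ∀ y σ, (σ = 1 ∨ σ = -1) → ∀ j τ, |g y σ j τ| ≤ 1 := by
    intro y σ hσ j τ
    have hσ1 : |σ| = 1 := by rcases hσ with h | h <;> rw [h] <;> simp
    have key : ∀ (b p : ℝ), 0 ≤ p → p ≤ 1 → (b = 0 ∨ b = 1) → ∀ c : ℝ, |c| = 1 →
        |c * (b - p) / (n : ℝ)| ≤ 1 := by
      intro b p hp0 hp1' hb c hc
      rw [abs_div, abs_mul, hc, one_mul, Nat.abs_cast]
      rw [div_le_one (by exact_mod_cast hn')]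
      have : |b - p| ≤ 1 := by
        rcases hb with h | h <;> subst h <;> rw [abs_le] <;> constructor <;> linarith
      calc |b - p| ≤ 1 := this
        _ ≤ (n : ℝ) := by exact_mod_cast hn'
    cases j with
    | inl j =>
        exact key _ _ (hp1b y).1 (hp1b y).2 (by by_cases h : τ ∈ A1 y <;> simp [h]) σ hσ1
    | inr j =>
        exact key _ _ (hp2b y).1 (hp2b y).2 (by by_cases h : τ ∈ A2 y <;> simp [h]) (-σ)
          (by rw [abs_neg]; exact hσ1)
  have hXmeas : ∀ y σ j, Measurable (X y σ j) := fun y σ j => (hgmeas y σ j).comp (hTmeas j)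
  have hXindep : ∀ y σ, iIndepFun (X y σ) P := fun y σ =>
    hTindep.comp (g y σ) (hgmeas y σ)
  have hXint : ∀ y σ, (σ = 1 ∨ σ = -1) → ∀ j t, Integrable (fun ω => Real.exp (t * X y σ j ω)) P :=
    fun y σ hσ j t => my_int_exp P (hXmeas y σ j) (fun ω => hgbdd y σ hσ j (T j ω)) t
  have hXmgf : ∀ y σ, (σ = 1 ∨ σ = -1) → ∀ j t,
      mgf (X y σ j) P t ≤ Real.exp (t ^ 2 / (8 * n ^ 2)) := by
    intro y σ hσ j t
    cases j with
    | inl j => exact my_mgf_ind P ν (T (Sum.inl j)) (hTmeas _) (hTlaw _) (hA1 y) hn' hσ t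
    | inr j =>
        have hσ' : -σ = 1 ∨ -σ = -1 := by rcases hσ with h | h <;> rw [h] <;> simp
        exact my_mgf_ind P ν (T (Sum.inr j)) (hTmeas _) (hTlaw _) (hA2 y) hn' hσ' t
  have hcard : Fintype.card (Fin n ⊕ Fin n) = 2 * n := by simp [two_mul]
  have htail : ∀ y σ, (σ = 1 ∨ σ = -1) →
      P {ω | s ≤ ∑ j, X y σ j ω} ≤ ENNReal.ofReal (Real.exp (-(n * s ^ 2))) := by
    intro y σ hσ
    rw [← ENNReal.ofReal_toReal (measure_ne_top P _)]
    exact ENNReal.ofReal_le_ofReal (my_chernoff P hn' hcard (X y σ) (hXindep y σ)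
      (hXmeas y σ) (fun j t => hXint y σ hσ j t) (fun j t => hXmgf y σ hσ j t) s hs0.le)
  set Bad : Set Ω := ⋃ y : Y,
    ({ω | s ≤ ∑ j, X y 1 j ω} ∪ {ω | s ≤ ∑ j, X y (-1) j ω}) with hBaddef
  have hSmeas : ∀ y σ, Measurable (fun ω => ∑ j, X y σ j ω) := fun y σ =>
    Finset.measurable_sum univ (fun j _ => hXmeas y σ j)
  have hBadmeas : MeasurableSet Bad :=
    MeasurableSet.iUnion (fun y =>
      (measurableSet_le measurable_const (hSmeas y 1)).union
        (measurableSet_le measurable_const (hSmeas y (-1))))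
  have hBadle : P Bad ≤ ENNReal.ofReal (2 * m * Real.exp (-(n * s ^ 2))) := by
    calc P Bad ≤ ∑' y : Y, P ({ω | s ≤ ∑ j, X y 1 j ω} ∪ {ω | s ≤ ∑ j, X y (-1) j ω}) :=
          measure_iUnion_le _
      _ = ∑ y : Y, P ({ω | s ≤ ∑ j, X y 1 j ω} ∪ {ω | s ≤ ∑ j, X y (-1) j ω}) := tsum_fintype _
      _ ≤ ∑ _y : Y, (ENNReal.ofReal (Real.exp (-(n * s ^ 2)))
            + ENNReal.ofReal (Real.exp (-(n * s ^ 2)))) :=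
          Finset.sum_le_sum fun y _ => le_trans (measure_union_le _ _)
            (add_le_add (htail y 1 (Or.inl rfl)) (htail y (-1) (Or.inr rfl)))
      _ = ENNReal.ofReal (2 * m * Real.exp (-(n * s ^ 2))) := by
          rw [Finset.sum_const, Finset.card_univ, ← hm,
            ← ENNReal.ofReal_add (Real.exp_nonneg _) (Real.exp_nonneg _)]
          rw [nsmul_eq_mul, ← ENNReal.ofReal_natCast m,
            ← ENNReal.ofReal_mul (Nat.cast_nonneg m)]
          congr 1
          ring
  -- identify the sums
  have hsum_id : ∀ y σ ω, ∑ j, X y σ j ω =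
      σ * ((((1 : ℝ) / n) * ∑ j : Fin n, (if f (x1 + T (Sum.inl j) ω) = y then (1 : ℝ) else 0)
        - ((1 : ℝ) / n) * ∑ j : Fin n, (if f (x2 + T (Sum.inr j) ω) = y then (1 : ℝ) else 0))
        - (p1 y - p2 y)) := by
    intro y σ ω
    rw [Fintype.sum_sum_type]
    have h1 : ∑ j : Fin n, X y σ (Sum.inl j) ω
        = σ * ((1 / n) * (∑ j : Fin n, (if f (x1 + T (Sum.inl j) ω) = y then (1 : ℝ) else 0)) - p1 y) := by
      rw [← my_sum_center hn' σ (p1 y) (fun j => if f (x1 + T (Sum.inl j) ω) = y then (1 : ℝ) else 0)]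
      rfl
    have h2 : ∑ j : Fin n, X y σ (Sum.inr j) ω
        = (-σ) * ((1 / n) * (∑ j : Fin n, (if f (x2 + T (Sum.inr j) ω) = y then (1 : ℝ) else 0)) - p2 y) := by
      rw [← my_sum_center hn' (-σ) (p2 y) (fun j => if f (x2 + T (Sum.inr j) ω) = y then (1 : ℝ) else 0)]
      rfl
    rw [h1, h2]
    ring
  have hsubset : Badᶜ ⊆ {ω : Ω | (1 / 2) * ∑ y,
            |((1 : ℝ) / n) * ∑ j : Fin n, (if f (x1 + T (Sum.inl j) ω) = y then (1 : ℝ) else 0)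
              - ((1 : ℝ) / n) * ∑ j : Fin n, (if f (x2 + T (Sum.inr j) ω) = y then (1 : ℝ) else 0)|
          ≤ D x1 x2 + ε} := by
    intro ω hω
    simp only [hBaddef, Set.compl_iUnion, Set.mem_iInter, Set.mem_compl_iff, Set.mem_union,
      Set.mem_setOf_eq, not_or, not_le] at hω
    simp only [Set.mem_setOf_eq]
    have hΔdef : ∀ y : Y, True := fun _ => trivial
    let Δ : Y → ℝ := fun y =>
      ((1 : ℝ) / n) * ∑ j : Fin n, (if f (x1 + T (Sum.inl j) ω) = y then (1 : ℝ) else 0)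
        - ((1 : ℝ) / n) * ∑ j : Fin n, (if f (x2 + T (Sum.inr j) ω) = y then (1 : ℝ) else 0)
    show (1 / 2) * ∑ y, |Δ y| ≤ D x1 x2 + ε
    have hneg : ∀ y, ∑ j, X y (-1) j ω = -∑ j, X y 1 j ω := by
      intro y
      rw [hsum_id y (-1) ω, hsum_id y 1 ω]
      ring
    have habs : ∀ y, |∑ j, X y 1 j ω| ≤ s := by
      intro y
      obtain ⟨h1, h2⟩ := hω y
      rw [hneg y] at h2
      rw [abs_le]
      constructor <;> [linarith; linarith]
    have hEq : ∀ y, Δ y = (∑ j, X y 1 j ω) + (p1 y - p2 y) := by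
      intro y
      show _ = _
      rw [hsum_id y 1 ω]
      ring
    have hy : ∀ y, |Δ y| ≤ |p1 y - p2 y| + s := by
      intro y
      rw [hEq y]
      calc |(∑ j, X y 1 j ω) + (p1 y - p2 y)|
          ≤ |∑ j, X y 1 j ω| + |p1 y - p2 y| := abs_add_le _ _
        _ ≤ |p1 y - p2 y| + s := by linarith [habs y]
    have hfair' : (1 / 2) * ∑ y, |p1 y - p2 y| ≤ D x1 x2 := by
      have := hfair x1 x2
      have heq : ∀ y : Y, |hbar x1 y - hbar x2 y| = |p1 y - p2 y| := by
        intro y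
        rw [hhbar x1 y, hhbar x2 y]
      rwa [Finset.sum_congr rfl (fun y _ => heq y)] at this
    calc (1 / 2) * ∑ y, |Δ y| ≤ (1 / 2) * ∑ y, (|p1 y - p2 y| + s) := by
          apply mul_le_mul_of_nonneg_left (Finset.sum_le_sum fun y _ => hy y) (by norm_num)
      _ = (1 / 2) * ∑ y, |p1 y - p2 y| + (1 / 2) * (m * s) := by
          rw [Finset.sum_add_distrib, Finset.sum_const, Finset.card_univ, ← hm, nsmul_eq_mul]
          ring
      _ ≤ D x1 x2 + ε := by
          have hms : (m : ℝ) * s = 2 * ε := by rw [hsdef]; field_simp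
          rw [hms]
          linarith
  calc ENNReal.ofReal (1 - 2 * m * Real.exp (-4 * n * ε ^ 2 / m ^ 2))
      = ENNReal.ofReal (1 - 2 * m * Real.exp (-(n * s ^ 2))) := by
        congr 3
        rw [hsdef]
        field_simp
        ring
    _ ≤ 1 - ENNReal.ofReal (2 * m * Real.exp (-(n * s ^ 2))) :=
        my_ofReal_one_sub (by positivity)
    _ ≤ 1 - P Bad := tsub_le_tsub_left hBadle 1
    _ = P Badᶜ := (prob_compl_eq_one_sub hBadmeas).symm
    _ ≤ _ := measure_mono hsubset
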